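/- Near-uniformity of the sum of uniform units: for every integer k ≥ 2 and every nonzero a ∈ ZMod q, the difference between the probability that the sum of k independent uniform elements of (ZMod q)ˣ equals a and the probability that it equals 0 is bounded in absolute value by 1/(q − 1)²; i.e., |N k a / (q−1)^k − N k 0 / (q−1)^k| ≤ 1/(q − 1)² (as rational numbers). -/

import Mathlib

/-- Number of tuples of `k` units of `ZMod q` whose sum equals `s`. -/
def unitSumCount (q : ℕ) [Fact (Nat.Prime q)] (k : ℕ) (s : ZMod q) : ℕ :=
  (Finset.univ.filter (fun r : Fin k → (ZMod q)ˣ => ∑ i, ((r i : ZMod q)) = s)).card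

lemma unitSumCount_card (q : ℕ) [Fact (Nat.Prime q)] (k : ℕ) (s : ZMod q) :
    unitSumCount q k s
      = Fintype.card {r : Fin k → (ZMod q)ˣ // ∑ i, ((r i : ZMod q)) = s} := by
  rw [unitSumCount, Fintype.card_subtype]

lemma unitSumCount_succ (q : ℕ) [Fact (Nat.Prime q)] (k : ℕ) (s : ZMod q) :
    unitSumCount q (k + 1) s = ∑ u : (ZMod q)ˣ, unitSumCount q k (s - u) := by
  simp only [unitSumCount_card]
  rw [← Fintype.card_sigma]
  apply Fintype.card_congr
  refine
    { toFun := fun r => ⟨r.1 0, Fin.tail r.1, ?_⟩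
      invFun := fun p => ⟨Fin.cons p.1 p.2.1, ?_⟩
      left_inv := ?_
      right_inv := ?_ }
  · have h := r.2
    rw [Fin.sum_univ_succ] at h
    exact eq_sub_of_add_eq' h
  · have h := p.2.2
    rw [Fin.sum_univ_succ]
    simp only [Fin.cons_zero, Fin.cons_succ, h]
    ring
  · intro r
    exact Subtype.ext (Fin.cons_self_tail r.1)
  · rintro ⟨u, r, h⟩
    simp [Fin.tail_cons]
    rfl

lemma unitSumCount_one (q : ℕ) [Fact (Nat.Prime q)] (s : ZMod q) :
    unitSumCount q 1 s = if s = 0 then 0 else 1 := by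
  rw [unitSumCount_card]
  split_ifs with hs
  · subst hs
    rw [Fintype.card_eq_zero_iff]
    refine ⟨fun ⟨r, hr⟩ => ?_⟩
    rw [Fin.sum_univ_one] at hr
    exact (r 0).ne_zero hr
  · rw [Fintype.card_eq_one_iff]
    refine ⟨⟨fun _ => Units.mk0 s hs, by simp⟩, ?_⟩
    rintro ⟨r, hr⟩
    rw [Fin.sum_univ_one] at hr
    ext i
    fin_cases i
    simp [Units.ext_iff, hr]

lemma unitSumCount_key (q : ℕ) [Fact (Nat.Prime q)] :
    ∀ n : ℕ, ∀ a : ZMod q, a ≠ 0 →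
      (unitSumCount q (n + 1) a : ℤ) = unitSumCount q (n + 1) 0 + (-1) ^ n := by
  intro n
  induction n with
  | zero => intro a ha; simp [unitSumCount_one, ha]
  | succ n ih =>
    intro a ha
    have key : ∀ s : ZMod q, (unitSumCount q (n + 2) s : ℤ)
        = ∑ u : (ZMod q)ˣ, (unitSumCount q (n + 1) (s - u) : ℤ) := by
      intro s
      rw [show n + 2 = (n + 1) + 1 from rfl, unitSumCount_succ]
      push_cast
      rfl
    set ua : (ZMod q)ˣ := Units.mk0 a ha with hua
    have hmem : ua ∈ (Finset.univ : Finset (ZMod q)ˣ) := Finset.mem_univ _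
    have hsplit : ∀ f : (ZMod q)ˣ → ℤ, ∑ u : (ZMod q)ˣ, f u
        = f ua + ∑ u ∈ Finset.univ.erase ua, f u :=
      fun f => (Finset.add_sum_erase _ f hmem).symm
    have herase : ∀ u ∈ Finset.univ.erase ua,
        (unitSumCount q (n + 1) (a - u) : ℤ)
          = unitSumCount q (n + 1) 0 + (-1) ^ n := by
      intro u hu
      apply ih
      intro h
      have : (u : ZMod q) = a := by linear_combination -h
      exact (Finset.mem_erase.mp hu).1 (Units.ext (by simp [hua, this, Units.val_mk0]))
    have herase0 : ∀ u ∈ Finset.univ.erase ua,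
        (unitSumCount q (n + 1) ((0 : ZMod q) - u) : ℤ)
          = unitSumCount q (n + 1) 0 + (-1) ^ n := by
      intro u hu
      apply ih
      simp [sub_eq_zero, eq_comm]
    have ha2 : (unitSumCount q (n + 2) a : ℤ)
        = unitSumCount q (n + 1) 0
          + ∑ u ∈ Finset.univ.erase ua, ((unitSumCount q (n + 1) 0 : ℤ) + (-1) ^ n) := by
      rw [key a, hsplit, Finset.sum_congr rfl herase]
      simp [hua]
    have h02 : (unitSumCount q (n + 2) 0 : ℤ)
        = ((unitSumCount q (n + 1) 0 : ℤ) + (-1) ^ n)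
          + ∑ u ∈ Finset.univ.erase ua, ((unitSumCount q (n + 1) 0 : ℤ) + (-1) ^ n) := by
      rw [key 0, hsplit, Finset.sum_congr rfl herase0]
      have : ((0 : ZMod q) - ua) ≠ 0 := by
        simp only [zero_sub, neg_ne_zero]
        exact ua.ne_zero
      rw [ih _ this]
    rw [ha2, h02]
    ring

/-- Near-uniformity of the sum of uniform units: for `k ≥ 2` and nonzero
`a`, the difference between the probabilities of hitting `a` and of hitting
`0` is at most `1/(q-1)²` in absolute value. -/
theorem unitSum_near_uniform (q : ℕ) [Fact (Nat.Prime q)] (k : ℕ) (hk : 2 ≤ k)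
    (a : ZMod q) (ha : a ≠ 0) :
    |(unitSumCount q k a : ℚ) / ((q : ℚ) - 1) ^ k -
        (unitSumCount q k 0 : ℚ) / ((q : ℚ) - 1) ^ k| ≤
      1 / ((q : ℚ) - 1) ^ 2 := by
  obtain ⟨n, rfl⟩ : ∃ n, k = n + 1 := ⟨k - 1, by omega⟩
  have hZ := unitSumCount_key q n a ha
  have hQ : (unitSumCount q (n + 1) a : ℚ) - unitSumCount q (n + 1) 0 = (-1) ^ n := by
    have : ((unitSumCount q (n + 1) a : ℤ) : ℚ)
        = ((unitSumCount q (n + 1) 0 + (-1) ^ n : ℤ) : ℚ) := by exact_mod_cast congrArg (fun x : ℤ => (x : ℚ)) hZ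
    push_cast at this
    linarith
  have hq : (2 : ℚ) ≤ (q : ℚ) := by exact_mod_cast (Fact.out : q.Prime).two_le
  have h1 : (1 : ℚ) ≤ (q : ℚ) - 1 := by linarith
  have hpos : (0 : ℚ) < (q : ℚ) - 1 := by linarith
  rw [div_sub_div_same, abs_div, abs_of_pos (pow_pos hpos _), hQ]
  have habs : |(-1 : ℚ) ^ n| = 1 := by
    rw [abs_pow, abs_neg, abs_one, one_pow]
  rw [habs]
  exact one_div_le_one_div_of_le (pow_pos hpos 2) (pow_le_pow_right₀ h1 hk)
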